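/- Let P be an F-program and (I,J) its ID-well-founded model. Then for every I' ⊆ I, the ID-stable operator of the simplified program satisfies S_{P^{I,J}}(I') = J; and for every J' ⊇ J, S_{P^{I,J}}(J') = S_P(J'). -/
import Mathlib


inductive Formula (α : Type) : Type 1
  | atom : α → Formula α
  | conj : {ι : Type} → (ι → Formula α) → Formula α
  | disj : {ι : Type} → (ι → Formula α) → Formula α
  | impl : Formula α → Formula α → Formula α

namespace Formula

def fbot {α : Type} : Formula α := .disj (fun i : Empty => i.elim)
def ftop {α : Type} : Formula α := .conj (fun i : Empty => i.elim)

def Sat {α : Type} (I : Set α) : Formula α → Prop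
  | .atom a => a ∈ I
  | .conj f => ∀ i, Sat I (f i)
  | .disj f => ∃ i, Sat I (f i)
  | .impl F G => Sat I F → Sat I G

open Classical in
noncomputable def reduct {α : Type} (I : Set α) : Bool → Formula α → Formula α
  | true, .atom a => .atom a
  | false, .atom a => if a ∈ I then ftop else fbot
  | pol, .conj f => .conj (fun i => reduct I pol (f i))
  | pol, .disj f => .disj (fun i => reduct I pol (f i))
  | true, .impl F G => .impl (reduct I false F) (reduct I true G)
  | false, .impl F G => .impl (reduct I true F) (reduct I false G)

def atomsPol {α : Type} : Bool → Formula α → Set α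
  | true, .atom a => {a}
  | false, .atom _ => ∅
  | pol, .conj f => ⋃ i, atomsPol pol (f i)
  | pol, .disj f => ⋃ i, atomsPol pol (f i)
  | pol, .impl F G => atomsPol (!pol) F ∪ atomsPol pol G

def Positive {α : Type} (F : Formula α) : Prop := atomsPol false F = ∅

open Classical in
noncomputable def freduct {α : Type} (X : Set α) : Formula α → Formula α
  | .atom a => if a ∈ X then .atom a else fbot
  | .conj f => if Sat X (.conj f) then .conj (fun i => freduct X (f i)) else fbot
  | .disj f => if Sat X (.disj f) then .disj (fun i => freduct X (f i)) else fbot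
  | .impl F G => if Sat X (.impl F G) then .impl (freduct X F) (freduct X G) else fbot

def noImpl {α : Type} : Formula α → Prop
  | .atom _ => True
  | .conj f => ∀ i, noImpl (f i)
  | .disj f => ∀ i, noImpl (f i)
  | .impl _ _ => False

def inR {α : Type} : Formula α → Prop
  | .atom _ => True
  | .conj f => ∀ i, inR (f i)
  | .disj f => ∀ i, inR (f i)
  | .impl F G => noImpl F ∧ inR G

end Formula

open Formula

structure Rule (α : Type) : Type 1 where
  head : α
  body : Formula α

abbrev Program (α : Type) := Set (Rule α)

def Tstep {α : Type} (P : Program α) (X : Set α) : Set α :=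
  {a | ∃ r ∈ P, r.head = a ∧ Sat X r.body}

noncomputable def progReduct {α : Type} (P : Program α) (I : Set α) : Program α :=
  (fun r => ⟨r.head, reduct I true r.body⟩) '' P

noncomputable def stableOp {α : Type} (P : Program α) (I : Set α) : Set α :=
  ⋂₀ {X | Tstep (progReduct P I) X ⊆ X}

def precLe {α : Type} (p q : Set α × Set α) : Prop := p.1 ⊆ q.1 ∧ q.2 ⊆ p.2

noncomputable def wfOp {α : Type} (P : Program α) (p : Set α × Set α) : Set α × Set α :=
  (stableOp P p.2, stableOp P p.1)

noncomputable def IsWFModel {α : Type} (P : Program α) (p : Set α × Set α) : Prop :=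
  wfOp P p = p ∧ ∀ q, wfOp P q = q → precLe p q

def IsModel {α : Type} (P : Program α) (X : Set α) : Prop :=
  ∀ r ∈ P, Sat X r.body → r.head ∈ X

noncomputable def freductProg {α : Type} (P : Program α) (X : Set α) : Program α :=
  (fun r => ⟨r.head, freduct X r.body⟩) '' P

noncomputable def StableModel {α : Type} (P : Program α) (X : Set α) : Prop :=
  IsModel (freductProg P X) X ∧ ∀ Y, IsModel (freductProg P X) Y → Y ⊆ X → Y = X

noncomputable def simpProg {α : Type} (P : Program α) (I J : Set α) : Program α :=
  {r | r ∈ P ∧ Sat J (reduct I true r.body)}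

noncomputable def relStable {α : Type} (P : Program α) (Ir J : Set α) : Set α :=
  ⋂₀ {X | Tstep (progReduct P J) (Ir ∪ X) ⊆ X}

noncomputable def relWF {α : Type} (P : Program α) (r p : Set α × Set α) : Set α × Set α :=
  (relStable P r.1 (p.2 ∪ r.2), relStable P r.2 (p.1 ∪ r.1))

lemma sat_ftop {α : Type} (X : Set α) : Sat X (ftop (α := α)) := fun i => i.elim

lemma not_sat_fbot {α : Type} (X : Set α) : ¬ Sat X (fbot (α := α)) := fun h => h.elim fun i _ => i.elim

lemma sat_reduct_mono {α : Type} (F : Formula α) :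
    ∀ (K X Y : Set α), X ⊆ Y →
      (Sat X (reduct K true F) → Sat Y (reduct K true F)) ∧
      (Sat Y (reduct K false F) → Sat X (reduct K false F)) := by
  induction F with
  | atom a =>
    intro K X Y h
    constructor
    · intro hs; exact h hs
    · intro hs
      simp only [reduct] at hs ⊢
      by_cases hc : a ∈ K
      · simp only [if_pos hc]; exact sat_ftop X
      · simp only [if_neg hc] at hs; exact absurd hs (not_sat_fbot Y)
  | conj f ih =>
    intro K X Y h
    constructor
    · intro hs i; exact (ih i K X Y h).1 (hs i)
    · intro hs i; exact (ih i K X Y h).2 (hs i)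
  | disj f ih =>
    intro K X Y h
    constructor
    · rintro ⟨i, hs⟩; exact ⟨i, (ih i K X Y h).1 hs⟩
    · rintro ⟨i, hs⟩; exact ⟨i, (ih i K X Y h).2 hs⟩
  | impl F G ihF ihG =>
    intro K X Y h
    constructor
    · intro hs hF
      exact (ihG K X Y h).1 (hs ((ihF K X Y h).2 hF))
    · intro hs hF
      exact (ihG K X Y h).2 (hs ((ihF K X Y h).1 hF))

lemma sat_reduct_anti {α : Type} (F : Formula α) :
    ∀ (K K' X : Set α), K ⊆ K' →
      (Sat X (reduct K' true F) → Sat X (reduct K true F)) ∧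
      (Sat X (reduct K false F) → Sat X (reduct K' false F)) := by
  induction F with
  | atom a =>
    intro K K' X h
    refine ⟨fun hs => hs, ?_⟩
    intro hs
    simp only [reduct] at hs ⊢
    by_cases hc : a ∈ K
    · simp only [if_pos hc] at hs; simp only [if_pos (h hc)]; exact sat_ftop X
    · simp only [if_neg hc] at hs; exact absurd hs (not_sat_fbot X)
  | conj f ih =>
    intro K K' X h
    exact ⟨fun hs i => (ih i K K' X h).1 (hs i), fun hs i => (ih i K K' X h).2 (hs i)⟩
  | disj f ih =>
    intro K K' X h
    constructor
    · rintro ⟨i, hs⟩; exact ⟨i, (ih i K K' X h).1 hs⟩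
    · rintro ⟨i, hs⟩; exact ⟨i, (ih i K K' X h).2 hs⟩
  | impl F G ihF ihG =>
    intro K K' X h
    constructor
    · intro hs hF
      exact (ihG K K' X h).1 (hs ((ihF K K' X h).2 hF))
    · intro hs hF
      exact (ihG K K' X h).2 (hs ((ihF K K' X h).1 hF))

lemma tstep_reduct_mem {α : Type} {Q : Program α} {K X : Set α} {a : α} :
    a ∈ Tstep (progReduct Q K) X ↔
      ∃ r ∈ Q, r.head = a ∧ Sat X (reduct K true r.body) := by
  constructor
  · rintro ⟨r', ⟨r, hr, rfl⟩, rfl, hsat⟩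
    exact ⟨r, hr, rfl, hsat⟩
  · rintro ⟨r, hr, rfl, hsat⟩
    exact ⟨⟨r.head, reduct K true r.body⟩, ⟨r, hr, rfl⟩, rfl, hsat⟩

lemma stableOp_le {α : Type} {Q : Program α} {K X : Set α}
    (hX : Tstep (progReduct Q K) X ⊆ X) : stableOp Q K ⊆ X :=
  Set.sInter_subset_of_mem hX

lemma stableOp_prefixed {α : Type} (Q : Program α) (K : Set α) :
    Tstep (progReduct Q K) (stableOp Q K) ⊆ stableOp Q K := by
  intro a ha
  rw [tstep_reduct_mem] at ha
  obtain ⟨r, hr, rfl, hsat⟩ := ha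
  rw [stableOp, Set.mem_sInter]
  intro X hX
  apply hX
  rw [tstep_reduct_mem]
  exact ⟨r, hr, rfl, (sat_reduct_mono r.body K _ X (stableOp_le hX)).1 hsat⟩

/-- Stable-operator properties of the simplification w.r.t. the well-founded model. -/
theorem stmt13 {α : Type} (P : Program α) (I J : Set α)
    (hWF : IsWFModel P (I, J)) :
    (∀ I' : Set α, I' ⊆ I → stableOp (simpProg P I J) I' = J) ∧
    (∀ J' : Set α, J ⊆ J' → stableOp (simpProg P I J) J' = stableOp P J') := by
  obtain ⟨hfix, hmin⟩ := hWF
  have hI : stableOp P J = I := congrArg Prod.fst hfix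
  have hJ : stableOp P I = J := congrArg Prod.snd hfix
  have hIJ : I ⊆ J := by
    have hq : wfOp P (J, I) = (J, I) := by
      simp only [wfOp, hI, hJ]
    exact (hmin (J, I) hq).1
  -- J is prefixed for the simplified program with any parameter
  have hJpre : ∀ K : Set α, Tstep (progReduct (simpProg P I J) K) J ⊆ J := by
    intro K a ha
    rw [tstep_reduct_mem] at ha
    obtain ⟨r, ⟨hrP, hrSat⟩, rfl, _⟩ := ha
    have : r.head ∈ Tstep (progReduct P I) J := tstep_reduct_mem.2 ⟨r, hrP, rfl, hrSat⟩
    rw [← hJ] at this ⊢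
    exact stableOp_prefixed P I this
  constructor
  · intro I' hI'
    apply Set.Subset.antisymm
    · exact stableOp_le (hJpre I')
    · -- J ⊆ stableOp (simpProg P I J) I'
      intro a haJ
      rw [stableOp, Set.mem_sInter]
      intro X hX
      have hZ : Tstep (progReduct P I) (X ∩ J) ⊆ X ∩ J := by
        intro b hb
        rw [tstep_reduct_mem] at hb
        obtain ⟨r, hrP, rfl, hsat⟩ := hb
        have hsatJ : Sat J (reduct I true r.body) :=
          (sat_reduct_mono r.body I (X ∩ J) J Set.inter_subset_right).1 hsat
        have hrS : r ∈ simpProg P I J := ⟨hrP, hsatJ⟩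
        have hbJ : r.head ∈ J := by
          have : r.head ∈ Tstep (progReduct P I) J := tstep_reduct_mem.2 ⟨r, hrP, rfl, hsatJ⟩
          rw [← hJ] at this ⊢
          exact stableOp_prefixed P I this
        have hsatX : Sat X (reduct I' true r.body) :=
          (sat_reduct_mono r.body I' (X ∩ J) X Set.inter_subset_left).1
            ((sat_reduct_anti r.body I' I (X ∩ J) hI').1 hsat)
        exact ⟨hX (tstep_reduct_mem.2 ⟨r, hrS, rfl, hsatX⟩), hbJ⟩
      have h2 : stableOp P I ⊆ X ∩ J := stableOp_le hZ
      rw [hJ] at h2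
      exact (h2 haJ).1
  · intro J' hJ'
    -- stableOp P J' ⊆ I
    have hS'I : stableOp P J' ⊆ I := by
      rw [← hI]
      apply stableOp_le
      intro a ha
      rw [tstep_reduct_mem] at ha
      obtain ⟨r, hrP, rfl, hsat⟩ := ha
      exact stableOp_prefixed P J
        (tstep_reduct_mem.2 ⟨r, hrP, rfl, (sat_reduct_anti r.body J J' _ hJ').1 hsat⟩)
    apply Set.Subset.antisymm
    · -- simp program is a subprogram of P
      apply stableOp_le
      intro a ha
      rw [tstep_reduct_mem] at ha
      obtain ⟨r, ⟨hrP, _⟩, rfl, hsat⟩ := ha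
      exact stableOp_prefixed P J' (tstep_reduct_mem.2 ⟨r, hrP, rfl, hsat⟩)
    · intro a haS
      rw [stableOp, Set.mem_sInter]
      intro X hX
      set S' := stableOp P J' with hS'
      have hZ : Tstep (progReduct P J') (X ∩ S') ⊆ X ∩ S' := by
        intro b hb
        rw [tstep_reduct_mem] at hb
        obtain ⟨r, hrP, rfl, hsat⟩ := hb
        have hbS' : r.head ∈ S' := stableOp_prefixed P J'
          (tstep_reduct_mem.2 ⟨r, hrP, rfl,
            (sat_reduct_mono r.body J' (X ∩ S') S' Set.inter_subset_right).1 hsat⟩)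
        have hII' : I ⊆ J' := hIJ.trans hJ'
        have hsatI : Sat (X ∩ S') (reduct I true r.body) :=
          (sat_reduct_anti r.body I J' (X ∩ S') hII').1 hsat
        have hZJ : X ∩ S' ⊆ J := Set.inter_subset_right.trans (hS'I.trans hIJ)
        have hrS : r ∈ simpProg P I J :=
          ⟨hrP, (sat_reduct_mono r.body I (X ∩ S') J hZJ).1 hsatI⟩
        have hsatX : Sat X (reduct J' true r.body) :=
          (sat_reduct_mono r.body J' (X ∩ S') X Set.inter_subset_left).1 hsat
        exact ⟨hX (tstep_reduct_mem.2 ⟨r, hrS, rfl, hsatX⟩), hbS'⟩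
      exact (stableOp_le hZ haS).1
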